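/- arXiv:1705.07579 — 2 statements merged into one kernel-verified Lean document; each statement's English description precedes it below -/
import Mathlib

section
/- Let X be a compact subset of [0,1] and f₀ : X → [0,1] a C¹ map satisfying: there exist c > 0 and λ > 1 such that for every n ≥ 1 and every x with x, f₀(x), …, f₀^{n-1}(x) ∈ X, one has |Df₀^n(x)| ≥ cλ^n. Then there exist ε₀ > 0, c₀ > 0 and λ₀ > 1 such that for every C¹ map f : X → [0,1] with ‖f₀ − f‖_{C¹} ≤ ε₀, and every x ∈ X and n ≥ 1 with x, f(x), …, f^{n-1}(x) ∈ X, one has |Df^n(x)| ≥ c₀λ₀^n. -/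
open Finset

open Finset

lemma prodDiffAux (a b : ℕ → ℝ) (M₁ δ : ℝ) (hM : 1 ≤ M₁) (hδ : 0 ≤ δ) :
    ∀ n : ℕ, (∀ i < n, |a i| ≤ M₁) → (∀ i < n, |b i| ≤ M₁) → (∀ i < n, |a i - b i| ≤ δ) →
      |(∏ i ∈ Finset.range n, a i) - ∏ i ∈ Finset.range n, b i| ≤ n * δ * M₁ ^ n := by
  intro n
  induction n with
  | zero => simp
  | succ k ih =>
    intro ha hb hab
    have ih' := ih (fun i hi => ha i (hi.trans k.lt_succ_self))
      (fun i hi => hb i (hi.trans k.lt_succ_self)) (fun i hi => hab i (hi.trans k.lt_succ_self))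
    rw [Finset.prod_range_succ, Finset.prod_range_succ]
    have hbk : |∏ i ∈ Finset.range k, b i| ≤ M₁ ^ k := by
      rw [abs_prod]
      calc ∏ i ∈ Finset.range k, |b i| ≤ ∏ i ∈ Finset.range k, M₁ := by
            refine Finset.prod_le_prod (fun i _ => abs_nonneg _) (fun i hi => ?_)
            exact hb i ((Finset.mem_range.mp hi).trans k.lt_succ_self)
        _ = M₁ ^ k := by rw [Finset.prod_const, Finset.card_range]
    have key : (∏ i ∈ Finset.range k, a i) * a k - (∏ i ∈ Finset.range k, b i) * b k
        = ((∏ i ∈ Finset.range k, a i) - ∏ i ∈ Finset.range k, b i) * a k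
          + (∏ i ∈ Finset.range k, b i) * (a k - b k) := by ring
    rw [key]
    have h1 : |((∏ i ∈ Finset.range k, a i) - ∏ i ∈ Finset.range k, b i) * a k| ≤ (k * δ * M₁ ^ k) * M₁ := by
      rw [abs_mul]
      exact mul_le_mul ih' (ha k k.lt_succ_self) (abs_nonneg _)
        (by positivity)
    have h2 : |(∏ i ∈ Finset.range k, b i) * (a k - b k)| ≤ M₁ ^ k * δ :=by
      rw [abs_mul]
      exact mul_le_mul hbk (hab k k.lt_succ_self) (abs_nonneg _) (by positivity)
    calc |_ + _| ≤ _ + _ := abs_add_le _ _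
      _ ≤ (k * δ * M₁ ^ k) * M₁ + M₁ ^ k * δ := add_le_add h1 h2
      _ ≤ (k+1 : ℕ) * δ * M₁ ^ (k+1) := by
          have hMk : (1:ℝ) ≤ M₁ ^ k := one_le_pow₀ hM
          push_cast
          rw [pow_succ]
          nlinarith [mul_nonneg (mul_nonneg hδ (pow_nonneg (le_trans zero_le_one hM) k)) (sub_nonneg.mpr hM), mul_nonneg (mul_nonneg (mul_nonneg (Nat.cast_nonneg (α := ℝ) k) hδ) (pow_nonneg (le_trans zero_le_one hM) k)) (sub_nonneg.mpr hM)]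
open Finset

lemma pseudoOrbitBound (X : Set ℝ) (hXc : IsCompact X)
    (f₀ f₀' : ℝ → ℝ) (hf₀X : ContinuousOn f₀ X) (hf₀c : ContinuousOn f₀' X)
    (N : ℕ)
    (hlow : ∀ z : ℕ → ℝ, (∀ i, z i ∈ X) → (∀ i, i + 1 < N → z (i+1) = f₀ (z i)) →
      (3:ℝ) ≤ |∏ i ∈ Finset.range N, f₀' (z i)|) :
    ∃ δ > (0:ℝ), ∀ z : ℕ → ℝ, (∀ i, z i ∈ X) → (∀ i, i + 1 < N → |z (i+1) - f₀ (z i)| ≤ δ) →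
      (5/2:ℝ) ≤ |∏ i ∈ Finset.range N, f₀' (z i)| := by
  classical
  set P : Set (ℕ → ℝ) := Set.univ.pi fun _ => X with hPdef
  have hP : IsCompact P := isCompact_univ_pi fun _ => hXc
  have hPmem : ∀ {z : ℕ → ℝ}, (∀ i, z i ∈ X) → z ∈ P := fun hz => Set.mem_univ_pi.mpr hz
  set G : (ℕ → ℝ) → ℝ := fun z => |∏ i ∈ Finset.range N, f₀' (z i)| with hGdef
  have hGc : ContinuousOn G P := by
    refine ContinuousOn.abs ?_
    refine continuousOn_finset_prod _ (fun i _ => ?_)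
    exact hf₀c.comp (continuous_apply i).continuousOn
      (fun z hz => hz i (Set.mem_univ i))
  set H : (ℕ → ℝ) → ℝ := fun z => ∑ i ∈ Finset.range (N-1), |z (i+1) - f₀ (z i)| with hHdef
  have hHc : ContinuousOn H P := by
    refine continuousOn_finset_sum _ (fun i _ => ?_)
    refine ContinuousOn.abs ?_
    exact (continuous_apply (i+1)).continuousOn.sub
      (hf₀X.comp (continuous_apply i).continuousOn (fun z hz => hz i (Set.mem_univ i)))
  set S : Set (ℕ → ℝ) := P ∩ G ⁻¹' (Set.Iic (5/2)) with hSdef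
  have hScl : IsClosed S := hGc.preimage_isClosed_of_isClosed hP.isClosed isClosed_Iic
  have hScomp : IsCompact S := hP.of_isClosed_subset hScl Set.inter_subset_left
  by_cases hSe : S.Nonempty
  · obtain ⟨w, hwS, hmin⟩ := hScomp.exists_isMinOn hSe (hHc.mono Set.inter_subset_left)
    have hwP : ∀ i, w i ∈ X := fun i => hwS.1 i (Set.mem_univ i)
    have hpos : 0 < H w := by
      have hnn : (0:ℝ) ≤ H w := Finset.sum_nonneg (fun i _ => abs_nonneg (w (i+1) - f₀ (w i)))
      rcases hnn.lt_or_eq with h | h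
      · exact h
      · exfalso
        have hzero : ∀ i ∈ Finset.range (N-1), |w (i+1) - f₀ (w i)| = 0 := by
          intro i hi
          have := (Finset.sum_eq_zero_iff_of_nonneg (fun i (_ : i ∈ Finset.range (N-1)) => abs_nonneg (w (i+1) - f₀ (w i)))).mp h.symm
          exact this i hi
        have horb : ∀ i, i + 1 < N → w (i+1) = f₀ (w i) := by
          intro i hi
          have : |w (i+1) - f₀ (w i)| = 0 := hzero i (Finset.mem_range.mpr (by omega))
          have := abs_eq_zero.mp this
          linarith
        have h3 := hlow w hwP horb
        have h52 : G w ≤ 5/2 := hwS.2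
        simp only [hGdef] at h52
        linarith
    refine ⟨H w / (2 * N + 2), by positivity, ?_⟩
    intro z hzX hzp
    by_contra hlt
    push_neg at hlt
    have hzS : z ∈ S := ⟨hPmem hzX, le_of_lt hlt⟩
    have hm := hmin hzS
    have hHz : H z ≤ (N - 1 : ℕ) * (H w / (2 * N + 2)) := by
      have := Finset.sum_le_card_nsmul (Finset.range (N-1))
        (fun i => |z (i+1) - f₀ (z i)|) (H w / (2 * N + 2))
        (fun i hi => hzp i (by have := Finset.mem_range.mp hi; omega))
      simpa [nsmul_eq_mul, Finset.card_range] using this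
    have hNle : ((N - 1 : ℕ) : ℝ) ≤ (N : ℝ) := by
      exact_mod_cast Nat.sub_le N 1
    have hNpos : (0:ℝ) ≤ (N:ℝ) := Nat.cast_nonneg N
    have hq : ((N : ℝ)) * (H w / (2 * N + 2)) < H w := by
      rw [div_eq_mul_inv]
      rw [show (N:ℝ) * (H w * (2 * (N:ℝ) + 2)⁻¹) = H w * ((N:ℝ) * (2 * (N:ℝ) + 2)⁻¹) by ring]
      have h1 : (N:ℝ) * (2 * (N:ℝ) + 2)⁻¹ < 1 := by
        rw [mul_inv_lt_iff₀ (by positivity)]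
        linarith
      nlinarith
    have : H z < H w := by
      calc H z ≤ (N - 1 : ℕ) * (H w / (2 * N + 2)) := hHz
        _ ≤ (N : ℝ) * (H w / (2 * N + 2)) := by
            apply mul_le_mul_of_nonneg_right hNle (by positivity)
        _ < H w := hq
    have : H w ≤ H z := hm
    linarith
  · refine ⟨1, one_pos, ?_⟩
    intro z hzX _
    by_contra hlt
    push_neg at hlt
    exact hSe ⟨z, hPmem hzX, le_of_lt hlt⟩


theorem stmt2 (X : Set ℝ) (hXc : IsCompact X) (hX1 : X ⊆ Set.Icc 0 1)
    (f₀ f₀' : ℝ → ℝ) (hf₀d : ∀ x ∈ X, HasDerivWithinAt f₀ (f₀' x) X x)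
    (hf₀c : ContinuousOn f₀' X) (hf₀m : Set.MapsTo f₀ X (Set.Icc 0 1))
    (c lam : ℝ) (hc : 0 < c) (hlam : 1 < lam)
    (hexp : ∀ n, 1 ≤ n → ∀ x, (∀ k < n, f₀^[k] x ∈ X) →
      c * lam ^ n ≤ |∏ k ∈ Finset.range n, f₀' (f₀^[k] x)|) :
    ∃ ε₀ > (0:ℝ), ∃ c₀ > (0:ℝ), ∃ lam₀ > (1:ℝ), ∀ f f' : ℝ → ℝ,
      (∀ x ∈ X, HasDerivWithinAt f (f' x) X x) → ContinuousOn f' X →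
      Set.MapsTo f X (Set.Icc 0 1) →
      (⨆ x : X, |f₀ x - f x|) + (⨆ x : X, |f₀' x - f' x|) ≤ ε₀ →
      ∀ n, 1 ≤ n → ∀ x ∈ X, (∀ k < n, f^[k] x ∈ X) →
        c₀ * lam₀ ^ n ≤ |∏ k ∈ Finset.range n, f' (f^[k] x)| := by
  rcases X.eq_empty_or_nonempty with hXe | ⟨x₀, hx₀⟩
  · exact ⟨1, one_pos, 1, one_pos, 2, one_lt_two,
      fun f f' _ _ _ _ n _ x hx _ => absurd hx (by simp [hXe])⟩
  have hf₀X : ContinuousOn f₀ X := fun x hx => (hf₀d x hx).continuousWithinAt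
  have hlam0 : (0:ℝ) < lam := lt_trans one_pos hlam
  have hcl : (0:ℝ) < c * lam := mul_pos hc hlam0
  have hf₀lb : ∀ y ∈ X, c * lam ≤ |f₀' y| := by
    intro y hy
    have h := hexp 1 le_rfl y (fun k hk => by interval_cases k; simpa using hy)
    simpa using h
  obtain ⟨M, hM⟩ := hXc.exists_bound_of_continuousOn hf₀c
  have hMb : ∀ y ∈ X, |f₀' y| ≤ M := fun y hy => by
    simpa [Real.norm_eq_abs] using hM y hy
  have hM0 : 0 < M := lt_of_lt_of_le hcl ((hf₀lb x₀ hx₀).trans (hMb x₀ hx₀))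
  set M₁ : ℝ := M + 1 with hM₁def
  have hM₁ : 1 ≤ M₁ := by simp only [hM₁def]; linarith
  -- choose N
  obtain ⟨N₀, hN₀⟩ := pow_unbounded_of_one_lt (R := ℝ) (3 / c) hlam
  set N : ℕ := N₀ + 1 with hNdef
  have hN1 : 1 ≤ N := by omega
  have hNexp : (3:ℝ) ≤ c * lam ^ N := by
    have hl : lam ^ N₀ ≤ lam ^ N := pow_le_pow_right₀ (le_of_lt hlam) (by omega)
    have h3 : (3:ℝ) = c * (3 / c) := by field_simp
    rw [h3]
    have := mul_lt_mul_of_pos_left hN₀ hc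
    nlinarith
  -- true orbit lower bound for pseudoOrbitBound
  have hlow : ∀ z : ℕ → ℝ, (∀ i, z i ∈ X) → (∀ i, i + 1 < N → z (i+1) = f₀ (z i)) →
      (3:ℝ) ≤ |∏ i ∈ Finset.range N, f₀' (z i)| := by
    intro z hzX horb
    have hiter : ∀ i, i < N → f₀^[i] (z 0) = z i := by
      intro i
      induction i with
      | zero => intro _; simp
      | succ k ih =>
        intro hi
        rw [Function.iterate_succ_apply', ih (by omega), ← horb k (by omega)]
    have hexpN := hexp N hN1 (z 0) (fun k hk => by rw [hiter k hk]; exact hzX k)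
    have heq : (∏ k ∈ Finset.range N, f₀' (f₀^[k] (z 0)))
        = ∏ k ∈ Finset.range N, f₀' (z k) := by
      refine Finset.prod_congr rfl (fun k hk => ?_)
      rw [hiter k (Finset.mem_range.mp hk)]
    rw [heq] at hexpN
    exact le_trans hNexp hexpN
  obtain ⟨δ, hδ, hpseudo⟩ := pseudoOrbitBound X hXc f₀ f₀' hf₀X hf₀c N hlow
  -- constants
  set ε₀ : ℝ := min (min δ 1) (min (c * lam / 2) (1 / (2 * N * M₁ ^ N))) with hε₀def
  have hNR : (0:ℝ) < (N:ℝ) := by exact_mod_cast hN1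
  have hM₁pow : (0:ℝ) < M₁ ^ N := pow_pos (by linarith) N
  have hε₀pos : 0 < ε₀ := by
    refine lt_min (lt_min hδ one_pos) (lt_min (by linarith) ?_)
    positivity
  set lam₀ : ℝ := (2:ℝ) ^ ((N:ℝ)⁻¹) with hlam₀def
  have hNne : ((N:ℝ)) ≠ 0 := ne_of_gt hNR
  have hlam₀1 : 1 < lam₀ := by
    rw [hlam₀def]
    exact (Real.one_lt_rpow_iff_of_pos (by norm_num)).mpr
      (Or.inl ⟨by norm_num, by positivity⟩)
  have hlam₀N : lam₀ ^ N = 2 := by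
    rw [hlam₀def, ← Real.rpow_natCast ((2:ℝ) ^ ((N:ℝ)⁻¹)) N, ← Real.rpow_mul (by norm_num),
      inv_mul_cancel₀ hNne, Real.rpow_one]
  set m₀ : ℝ := min (c * lam / 2) 1 with hm₀def
  have hm₀pos : 0 < m₀ := lt_min (by linarith) one_pos
  have hm₀le1 : m₀ ≤ 1 := min_le_right _ _
  set c₀ : ℝ := m₀ ^ N / 2 with hc₀def
  have hc₀pos : 0 < c₀ := by positivity
  have hm₀pow_le1 : m₀ ^ N ≤ 1 := pow_le_one₀ hm₀pos.le hm₀le1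
  have hc₀le1 : c₀ ≤ 1 := by rw [hc₀def]; linarith
  refine ⟨ε₀, hε₀pos, c₀, hc₀pos, lam₀, hlam₀1, ?_⟩
  intro f f' hfd hfc hfm hsup
  -- pointwise closeness
  have hs1nn : 0 ≤ ⨆ x : X, |f₀ x - f x| := Real.iSup_nonneg (fun x => abs_nonneg _)
  have hs2nn : 0 ≤ ⨆ x : X, |f₀' x - f' x| := Real.iSup_nonneg (fun x => abs_nonneg _)
  have hb1 : ∀ y ∈ X, |f₀ y - f y| ≤ ε₀ := by
    intro y hy
    have hbdd : BddAbove (Set.range fun x : X => |f₀ x - f x|) := by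
      refine ⟨1, ?_⟩
      rintro _ ⟨x, rfl⟩
      have h1 := hf₀m x.2
      have h2 := hfm x.2
      rw [Set.mem_Icc] at h1 h2
      exact abs_le.mpr ⟨by linarith, by linarith⟩
    have := le_ciSup hbdd (⟨y, hy⟩ : X)
    linarith [hsup]
  have hb2 : ∀ y ∈ X, |f₀' y - f' y| ≤ ε₀ := by
    intro y hy
    obtain ⟨C, hC⟩ := hXc.exists_bound_of_continuousOn (hf₀c.sub hfc)
    have hbdd : BddAbove (Set.range fun x : X => |f₀' x - f' x|) := by
      refine ⟨C, ?_⟩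
      rintro _ ⟨x, rfl⟩
      simpa [Real.norm_eq_abs] using hC x x.2
    have := le_ciSup hbdd (⟨y, hy⟩ : X)
    linarith [hsup]
  have hεδ : ε₀ ≤ δ := (min_le_left _ _).trans (min_le_left _ _)
  have hε1 : ε₀ ≤ 1 := (min_le_left _ _).trans (min_le_right _ _)
  have hεcl : ε₀ ≤ c * lam / 2 := (min_le_right _ _).trans (min_le_left _ _)
  have hεM : ε₀ ≤ 1 / (2 * N * M₁ ^ N) := (min_le_right _ _).trans (min_le_right _ _)
  -- per-step lower bound
  have hstep : ∀ y ∈ X, m₀ ≤ |f' y| := by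
    intro y hy
    have h1 := hf₀lb y hy
    have h2 := hb2 y hy
    have h3 : |f₀' y| - |f' y| ≤ |f₀' y - f' y| := abs_sub_abs_le_abs_sub _ _
    have : c * lam / 2 ≤ |f' y| := by linarith
    exact le_trans (min_le_left _ _) this
  -- block bound
  have hblock : ∀ y ∈ X, (∀ k < N, f^[k] y ∈ X) →
      (2:ℝ) ≤ ∏ k ∈ Finset.range N, |f' (f^[k] y)| := by
    intro y hy horb
    set z : ℕ → ℝ := fun i => f^[min i (N-1)] y with hzdef
    have hzX : ∀ i, z i ∈ X := fun i => horb _ (by omega)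
    have hzi : ∀ i, i < N → z i = f^[i] y := by
      intro i hi
      simp only [hzdef]
      rw [Nat.min_eq_left (by omega : i ≤ N - 1)]
    have hzp : ∀ i, i + 1 < N → |z (i+1) - f₀ (z i)| ≤ δ := by
      intro i hi
      rw [hzi (i+1) hi, hzi i (by omega), Function.iterate_succ_apply']
      have hw : f^[i] y ∈ X := horb i (by omega)
      calc |f (f^[i] y) - f₀ (f^[i] y)| = |f₀ (f^[i] y) - f (f^[i] y)| := abs_sub_comm _ _
        _ ≤ ε₀ := hb1 _ hw
        _ ≤ δ := hεδ
    have h52 := hpseudo z hzX hzp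
    have h52' : (5/2:ℝ) ≤ |∏ i ∈ Finset.range N, f₀' (f^[i] y)| := by
      have heq : (∏ i ∈ Finset.range N, f₀' (z i)) = ∏ i ∈ Finset.range N, f₀' (f^[i] y) :=
        Finset.prod_congr rfl (fun i hi => by rw [hzi i (Finset.mem_range.mp hi)])
      rwa [heq] at h52
    have hdiff : |(∏ i ∈ Finset.range N, f' (f^[i] y)) - ∏ i ∈ Finset.range N, f₀' (f^[i] y)|
        ≤ N * ε₀ * M₁ ^ N := by
      refine prodDiffAux _ _ M₁ ε₀ hM₁ hε₀pos.le N ?_ ?_ ?_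
      · intro i hi
        have hw : f^[i] y ∈ X := horb i hi
        have h1 := hMb _ hw
        have h2 := hb2 _ hw
        have h3 : |f' (f^[i] y)| - |f₀' (f^[i] y)| ≤ |f' (f^[i] y) - f₀' (f^[i] y)| :=
          abs_sub_abs_le_abs_sub _ _
        rw [abs_sub_comm] at h3
        simp only [hM₁def]
        linarith
      · intro i hi
        have hw : f^[i] y ∈ X := horb i hi
        have := hMb _ hw
        simp only [hM₁def]
        linarith
      · intro i hi
        have hw : f^[i] y ∈ X := horb i hi
        rw [abs_sub_comm]
        exact hb2 _ hw
    have hhalf : (N:ℝ) * ε₀ * M₁ ^ N ≤ 1/2 := by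
      rw [le_div_iff₀ (by positivity)] at hεM
      nlinarith
    have habs : |∏ i ∈ Finset.range N, f₀' (f^[i] y)| - |∏ i ∈ Finset.range N, f' (f^[i] y)|
        ≤ |(∏ i ∈ Finset.range N, f' (f^[i] y)) - ∏ i ∈ Finset.range N, f₀' (f^[i] y)| := by
      rw [abs_sub_comm]
      exact abs_sub_abs_le_abs_sub _ _
    have h2' : (2:ℝ) ≤ |∏ i ∈ Finset.range N, f' (f^[i] y)| := by linarith
    rwa [abs_prod] at h2'
  -- main induction
  have main : ∀ n : ℕ, ∀ x ∈ X, (∀ k < n, f^[k] x ∈ X) →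
      c₀ * lam₀ ^ n ≤ ∏ k ∈ Finset.range n, |f' (f^[k] x)| := by
    intro n
    induction n using Nat.strong_induction_on with
    | _ n ih =>
      intro x hx horb
      by_cases hNn : N ≤ n
      · obtain ⟨m, rfl⟩ : ∃ m, n = N + m := ⟨n - N, by omega⟩
        rw [Finset.prod_range_add]
        have hB := hblock x hx (fun k hk => horb k (by omega))
        rcases Nat.eq_zero_or_pos m with rfl | hm
        · simp only [Finset.range_zero, Finset.prod_empty, mul_one, Nat.add_zero]
          rw [hlam₀N]
          have h2c : c₀ * 2 ≤ 2 := by linarith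
          linarith
        · have hx' : f^[N] x ∈ X := horb N (by omega)
          have horb' : ∀ k < m, f^[k] (f^[N] x) ∈ X := by
            intro k hk
            rw [← Function.iterate_add_apply]
            exact horb (k + N) (by omega)
          have ihm := ih m (by omega) (f^[N] x) hx' horb'
          have heq : (∏ k ∈ Finset.range m, |f' (f^[N + k] x)|)
              = ∏ k ∈ Finset.range m, |f' (f^[k] (f^[N] x))| := by
            refine Finset.prod_congr rfl (fun k _ => ?_)
            rw [Nat.add_comm N k, Function.iterate_add_apply]
          rw [heq]
          have hrest0 : (0:ℝ) ≤ ∏ k ∈ Finset.range m, |f' (f^[k] (f^[N] x))| :=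
            Finset.prod_nonneg (fun k _ => abs_nonneg _)
          calc c₀ * lam₀ ^ (N + m) = 2 * (c₀ * lam₀ ^ m) := by rw [pow_add, hlam₀N]; ring
            _ ≤ 2 * ∏ k ∈ Finset.range m, |f' (f^[k] (f^[N] x))| := by linarith
            _ ≤ (∏ k ∈ Finset.range N, |f' (f^[k] x)|) *
                  ∏ k ∈ Finset.range m, |f' (f^[k] (f^[N] x))| :=
                mul_le_mul_of_nonneg_right hB hrest0
      · have h1 : (∏ k ∈ Finset.range n, m₀) ≤ ∏ k ∈ Finset.range n, |f' (f^[k] x)| :=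
          Finset.prod_le_prod (fun k _ => hm₀pos.le)
            (fun k hk => hstep _ (horb k (Finset.mem_range.mp hk)))
        rw [Finset.prod_const, Finset.card_range] at h1
        have h2 : m₀ ^ N ≤ m₀ ^ n := pow_le_pow_of_le_one hm₀pos.le hm₀le1 (by omega)
        have h3 : lam₀ ^ n ≤ 2 := by
          calc lam₀ ^ n ≤ lam₀ ^ N := pow_le_pow_right₀ hlam₀1.le (by omega)
            _ = 2 := hlam₀N
        have h4 : (0:ℝ) < lam₀ ^ n := pow_pos (by linarith) n
        calc c₀ * lam₀ ^ n ≤ c₀ * 2 := mul_le_mul_of_nonneg_left h3 hc₀pos.le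
          _ = m₀ ^ N := by rw [hc₀def]; ring
          _ ≤ m₀ ^ n := h2
          _ ≤ _ := h1
  intro n hn x hx horb
  rw [abs_prod]
  exact main n x hx horb
end

section
/- Let f₀ ∈ ℰ be of class C² with bounded distortion constant M₀ > 1. Then for every i ∈ {1,…,p−1}, every n ≥ 1 and every word a₀⋯a_{n-1}, the gap proportion satisfies Δ^{(i)}_{a₀⋯a_{n-1}}(f₀) ≤ K(f₀), where Δ^{(i)} = |X_{a₀⋯a_{n-1}î}| / |X_{a₀⋯a_{n-1}□_i}| − 1 and K(f₀) = max_{1≤i≤p−1} (1 − M₀^{-1}(α_i − β_{i-1})) / (M₀^{-1}(α_i − β_{i-1})). -/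
open MeasureTheory

/-- The cylinder interval `X_{a₀⋯a_{n-1}}(f)`. -/
def Xcyl (f : ℝ → ℝ) (α β : ℕ → ℝ) (a : ℕ → ℕ) (n : ℕ) : Set ℝ :=
  {x | ∀ k < n, f^[k] x ∈ Set.Icc (α (a k)) (β (a k))}

/-- The gap `X_{a₀⋯a_{n-1}□_i}(f) = {x ∈ X_{a₀⋯a_{n-1}}(f) : f^n(x) ∈ (β_{i-1}, α_i)}`. -/
def Xgap (f : ℝ → ℝ) (α β : ℕ → ℝ) (a : ℕ → ℕ) (n i : ℕ) : Set ℝ :=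
  {x ∈ Xcyl f α β a n | f^[n] x ∈ Set.Ioo (β (i - 1)) (α i)}

/-- `X_{a₀⋯a_{n-1}î}(f) = {x ∈ X_{a₀⋯a_{n-1}}(f) : f^n(x) ∈ [α_{i-1}, β_i]}`. -/
def Xhat (f : ℝ → ℝ) (α β : ℕ → ℝ) (a : ℕ → ℕ) (n i : ℕ) : Set ℝ :=
  {x ∈ Xcyl f α β a n | f^[n] x ∈ Set.Icc (α (i - 1)) (β i)}

/-- Length of a (bounded) set of reals. -/
noncomputable def len (S : Set ℝ) : ℝ := (volume S).toReal

/-- Auxiliary set: cylinder with final window `J`. -/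
def XJ (f : ℝ → ℝ) (α β : ℕ → ℝ) (a : ℕ → ℕ) (n : ℕ) (J : Set ℝ) : Set ℝ :=
  {x | (∀ k < n, f^[k] x ∈ Set.Icc (α (a k)) (β (a k))) ∧ f^[n] x ∈ J}

lemma XJ_zero (f : ℝ → ℝ) (α β : ℕ → ℝ) (a : ℕ → ℕ) (J : Set ℝ) :
    XJ f α β a 0 J = J := by
  ext x; simp [XJ]

lemma XJ_succ (f : ℝ → ℝ) (α β : ℕ → ℝ) (a : ℕ → ℕ) (n : ℕ) (J : Set ℝ) :
    XJ f α β a (n + 1) J =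
      {x ∈ Set.Icc (α (a 0)) (β (a 0)) | f x ∈ XJ f α β (fun k => a (k + 1)) n J} := by
  ext x
  simp only [XJ, Set.mem_setOf_eq, Set.mem_sep_iff]
  constructor
  · rintro ⟨h1, h2⟩
    refine ⟨by simpa using h1 0 (Nat.succ_pos n), fun k hk => ?_, ?_⟩
    · rw [← Function.iterate_succ_apply]
      exact h1 (k + 1) (by omega)
    · rw [← Function.iterate_succ_apply]; exact h2
  · rintro ⟨h0, h1, h2⟩
    refine ⟨fun k hk => ?_, ?_⟩
    · cases k with
      | zero => simpa using h0
      | succ k => rw [Function.iterate_succ_apply]; exact h1 k (by omega)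
    · rw [Function.iterate_succ_apply]; exact h2

lemma XJ_ordConnected {p : ℕ} {α β : ℕ → ℝ} {f : ℝ → ℝ}
    (hmono : ∀ i < p, StrictMonoOn f (Set.Icc (α i) (β i)) ∨
      StrictAntiOn f (Set.Icc (α i) (β i)))
    {J : Set ℝ} (hJ : J.OrdConnected) :
    ∀ (n : ℕ) (a : ℕ → ℕ), (∀ k, a k < p) → (XJ f α β a n J).OrdConnected := by
  intro n
  induction n with
  | zero => intro a ha; rw [XJ_zero]; exact hJ
  | succ n ih =>
    intro a ha
    rw [XJ_succ]
    constructor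
    rintro x ⟨hx0, hx1⟩ y ⟨hy0, hy1⟩ z hz
    have hzI : z ∈ Set.Icc (α (a 0)) (β (a 0)) :=
      Set.ordConnected_Icc.out hx0 hy0 hz
    have hS' := ih (fun k => a (k + 1)) (fun k => ha (k + 1))
    refine ⟨hzI, ?_⟩
    rcases hmono (a 0) (ha 0) with hm | hm
    · exact hS'.out hx1 hy1 ⟨hm.monotoneOn hx0 hzI hz.1, hm.monotoneOn hzI hy0 hz.2⟩
    · exact hS'.out hy1 hx1 ⟨hm.antitoneOn hzI hy0 hz.2, hm.antitoneOn hx0 hzI hz.1⟩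

lemma XJ_subset01 {p : ℕ} {α β : ℕ → ℝ} {f : ℝ → ℝ}
    (hbounds : ∀ j < p, Set.Icc (α j) (β j) ⊆ Set.Icc (0:ℝ) 1)
    {J : Set ℝ} (hJ01 : J ⊆ Set.Icc (0:ℝ) 1)
    (n : ℕ) (a : ℕ → ℕ) (ha : ∀ k, a k < p) :
    XJ f α β a n J ⊆ Set.Icc (0:ℝ) 1 := by
  cases n with
  | zero => rw [XJ_zero]; exact hJ01
  | succ n =>
    rw [XJ_succ]
    exact fun x hx => hbounds (a 0) (ha 0) hx.1

lemma XJ_surj {p : ℕ} {α β : ℕ → ℝ} {f : ℝ → ℝ}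
    (hbounds : ∀ j < p, Set.Icc (α j) (β j) ⊆ Set.Icc (0:ℝ) 1)
    (hbr : ∀ i < p, f '' Set.Icc (α i) (β i) = Set.Icc (0:ℝ) 1)
    {J : Set ℝ} (hJ01 : J ⊆ Set.Icc (0:ℝ) 1) :
    ∀ (n : ℕ) (a : ℕ → ℕ), (∀ k, a k < p) → ∀ y ∈ J,
      ∃ x ∈ XJ f α β a n J, f^[n] x = y := by
  intro n
  induction n with
  | zero =>
    intro a ha y hy
    exact ⟨y, by rw [XJ_zero]; exact hy, rfl⟩
  | succ n ih =>
    intro a ha y hy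
    obtain ⟨x', hx', hfx'⟩ := ih (fun k => a (k + 1)) (fun k => ha (k + 1)) y hy
    have hx'01 : x' ∈ Set.Icc (0:ℝ) 1 :=
      XJ_subset01 hbounds hJ01 n (fun k => a (k + 1)) (fun k => ha (k + 1)) hx'
    have : x' ∈ f '' Set.Icc (α (a 0)) (β (a 0)) := by rw [hbr (a 0) (ha 0)]; exact hx'01
    obtain ⟨x, hxI, hfx⟩ := this
    refine ⟨x, ?_, ?_⟩
    · rw [XJ_succ]; exact ⟨hxI, by rw [hfx]; exact hx'⟩
    · rw [Function.iterate_succ_apply, hfx, hfx']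

lemma XJ_deriv {p : ℕ} {α β : ℕ → ℝ} {X : Set ℝ} {f f' : ℝ → ℝ}
    (hder : ∀ x ∈ X, HasDerivWithinAt f (f' x) X x)
    (hXsub : ∀ j < p, Set.Icc (α j) (β j) ⊆ X)
    {J : Set ℝ} :
    ∀ (n : ℕ) (a : ℕ → ℕ), (∀ k, a k < p) → ∀ x ∈ XJ f α β a n J,
      HasDerivWithinAt f^[n] (∏ k ∈ Finset.range n, f' (f^[k] x)) (XJ f α β a n J) x := by
  intro n
  induction n with
  | zero =>
    intro a ha x hx
    simpa [Function.iterate_zero] using hasDerivWithinAt_id x (XJ f α β a 0 J)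
  | succ n ih =>
    intro a ha x hx
    rw [XJ_succ] at hx ⊢
    obtain ⟨hx0, hx1⟩ := hx
    have hmaps : Set.MapsTo f {x ∈ Set.Icc (α (a 0)) (β (a 0)) |
        f x ∈ XJ f α β (fun k => a (k + 1)) n J} (XJ f α β (fun k => a (k + 1)) n J) :=
      fun y hy => hy.2
    have hf : HasDerivWithinAt f (f' x)
        {x ∈ Set.Icc (α (a 0)) (β (a 0)) | f x ∈ XJ f α β (fun k => a (k + 1)) n J} x :=
      (hder x (hXsub (a 0) (ha 0) hx0)).mono
        ((Set.sep_subset _ _).trans (hXsub (a 0) (ha 0)))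
    have hg := ih (fun k => a (k + 1)) (fun k => ha (k + 1)) (f x) hx1
    have hcomp := hg.comp x hf hmaps
    have heq : (∏ k ∈ Finset.range n, f' (f^[k] (f x))) * f' x =
        ∏ k ∈ Finset.range (n + 1), f' (f^[k] x) := by
      rw [Finset.prod_range_succ']
      simp [Function.iterate_succ_apply]
    rw [← Function.iterate_succ] at hcomp
    rwa [← heq]

lemma XJ_inj {p : ℕ} {α β : ℕ → ℝ} {f : ℝ → ℝ}
    (hbr : ∀ i < p, Set.InjOn f (Set.Icc (α i) (β i)))
    {J : Set ℝ} :
    ∀ (n : ℕ) (a : ℕ → ℕ), (∀ k, a k < p) → Set.InjOn f^[n] (XJ f α β a n J) := by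
  intro n
  induction n with
  | zero => intro a ha; simpa [Function.iterate_zero] using Set.injOn_id (XJ f α β a 0 J)
  | succ n ih =>
    intro a ha
    rw [XJ_succ, Function.iterate_succ]
    exact Set.InjOn.comp (ih (fun k => a (k + 1)) (fun k => ha (k + 1)))
      ((hbr (a 0) (ha 0)).mono (Set.sep_subset _ _)) (fun y hy => hy.2)

lemma XJ_volume_image {α β : ℕ → ℝ} {f f' : ℝ → ℝ} {a : ℕ → ℕ} {n : ℕ} {J : Set ℝ}
    (hs : MeasurableSet (XJ f α β a n J))
    (hder : ∀ x ∈ XJ f α β a n J,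
      HasDerivWithinAt f^[n] (∏ k ∈ Finset.range n, f' (f^[k] x)) (XJ f α β a n J) x)
    (hinj : Set.InjOn f^[n] (XJ f α β a n J)) :
    volume (f^[n] '' XJ f α β a n J) =
      ∫⁻ x in XJ f α β a n J, ENNReal.ofReal |∏ k ∈ Finset.range n, f' (f^[k] x)| := by
  have h := lintegral_image_eq_lintegral_abs_det_fderiv_mul volume hs
    (f' := fun x => (1 : ℝ →L[ℝ] ℝ).smulRight (∏ k ∈ Finset.range n, f' (f^[k] x)))
    (fun x hx => (hder x hx).hasFDerivWithinAt) hinj (fun _ => 1)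
  simpa [ContinuousLinearMap.det_toSpanSingleton, setLIntegral_one] using h

theorem stmt6 (p : ℕ) (hp : 2 ≤ p) (α β : ℕ → ℝ) (X : Set ℝ)
    (hX : X = ⋃ i ∈ Finset.range p, Set.Icc (α i) (β i))
    (hab : ∀ i < p, α i < β i) (hba : ∀ i, i + 1 < p → β i < α (i + 1))
    (hα0 : α 0 = 0) (hβlast : β (p - 1) = 1)
    (f f' : ℝ → ℝ)
    (hder : ∀ x ∈ X, HasDerivWithinAt f (f' x) X x)
    (hctd : ContinuousOn f' X)
    (hbr : ∀ i < p, Set.InjOn f (Set.Icc (α i) (β i)) ∧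
      f '' Set.Icc (α i) (β i) = Set.Icc (0:ℝ) 1)
    (c lam : ℝ) (hc : 0 < c) (hlam : 1 < lam)
    (hexp : ∀ n, 1 ≤ n → ∀ x, (∀ k < n, f^[k] x ∈ X) →
      c * lam ^ n ≤ |∏ k ∈ Finset.range n, f' (f^[k] x)|)
    -- `f` is C² with bounded distortion constant `M₀ > 1`
    (K : NNReal) (hlip : LipschitzOnWith K f' X) (hnz : ∀ x ∈ X, f' x ≠ 0)
    (M₀ : ℝ) (hM₀ : 1 < M₀)
    (hdist : ∀ n, 1 ≤ n → ∀ a : ℕ → ℕ, (∀ k, a k < p) →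
      ∀ x ∈ Xcyl f α β a n, ∀ y ∈ Xcyl f α β a n,
        |∏ k ∈ Finset.range n, f' (f^[k] x)| / |∏ k ∈ Finset.range n, f' (f^[k] y)| ≤ M₀) :
    ∀ i, 1 ≤ i → i ≤ p - 1 → ∀ n, 1 ≤ n → ∀ a : ℕ → ℕ, (∀ k, a k < p) →
      len (Xhat f α β a n i) / len (Xgap f α β a n i) - 1 ≤
        (Finset.Icc 1 (p - 1)).sup' (Finset.nonempty_Icc.mpr (by omega))
          (fun j => (1 - M₀⁻¹ * (α j - β (j - 1))) / (M₀⁻¹ * (α j - β (j - 1)))) := by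
  intro i h1i hip n hn a ha
  have hM0pos : (0:ℝ) < M₀ := by linarith
  have hip' : i < p := by omega
  have hi1p : i - 1 < p := by omega
  have hi1s : i - 1 + 1 = i := by omega
  -- basic bounds on α, β
  have hα_nonneg : ∀ j, j < p → 0 ≤ α j := by
    intro j
    induction j with
    | zero => intro _; exact hα0.ge
    | succ j ihj =>
      intro hj
      have hj' : j < p := by omega
      have h1 := ihj hj'
      have h2 := hab j hj'
      have h3 := hba j hj
      linarith
  have hβaux : ∀ d j, j + d + 1 = p → β j ≤ 1 := by
    intro d
    induction d with
    | zero =>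
      intro j hj
      have : j = p - 1 := by omega
      rw [this, hβlast]
    | succ d ihd =>
      intro j hj
      have h1 : j + 1 < p := by omega
      have h2 := hba j h1
      have h3 := hab (j + 1) h1
      have h4 := ihd (j + 1) (by omega)
      linarith
  have hβ_le1 : ∀ j, j < p → β j ≤ 1 := fun j hj => hβaux (p - j - 1) j (by omega)
  have hbounds : ∀ j < p, Set.Icc (α j) (β j) ⊆ Set.Icc (0:ℝ) 1 := by
    intro j hj x hx
    exact ⟨le_trans (hα_nonneg j hj) hx.1, le_trans hx.2 (hβ_le1 j hj)⟩
  have hXsub : ∀ j < p, Set.Icc (α j) (β j) ⊆ X := by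
    intro j hj
    intro x hx
    rw [hX]
    exact Set.mem_biUnion (Finset.mem_range.mpr hj) hx
  have hcont : ContinuousOn f X := fun x hx => (hder x hx).continuousWithinAt
  have hmono : ∀ j < p, StrictMonoOn f (Set.Icc (α j) (β j)) ∨
      StrictAntiOn f (Set.Icc (α j) (β j)) := fun j hj =>
    ContinuousOn.strictMonoOn_of_injOn_Icc' (hab j hj).le (hcont.mono (hXsub j hj)) (hbr j hj).1
  -- interval facts
  have hg : 0 < α i - β (i - 1) := by
    have h := hba (i - 1) (by omega)
    rw [hi1s] at h
    linarith
  have hαβ1 := hab (i - 1) hi1p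
  have hαβ2 := hab i hip'
  have hB1 : β i - α (i - 1) ≤ 1 := by
    have := hα_nonneg (i - 1) hi1p
    have := hβ_le1 i hip'
    linarith
  -- identify the sets
  have ehat : Xhat f α β a n i = XJ f α β a n (Set.Icc (α (i - 1)) (β i)) := rfl
  have egap : Xgap f α β a n i = XJ f α β a n (Set.Ioo (β (i - 1)) (α i)) := rfl
  set Shat := XJ f α β a n (Set.Icc (α (i - 1)) (β i)) with hShat
  set Sgap := XJ f α β a n (Set.Ioo (β (i - 1)) (α i)) with hSgap
  have hmhat : MeasurableSet Shat :=
    (XJ_ordConnected hmono Set.ordConnected_Icc n a ha).measurableSet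
  have hmgap : MeasurableSet Sgap :=
    (XJ_ordConnected hmono Set.ordConnected_Ioo n a ha).measurableSet
  have hIcc01 : Set.Icc (α (i - 1)) (β i) ⊆ Set.Icc (0:ℝ) 1 := by
    intro y hy
    have := hα_nonneg (i - 1) hi1p
    have := hβ_le1 i hip'
    exact ⟨by linarith [hy.1], by linarith [hy.2]⟩
  have hIoo01 : Set.Ioo (β (i - 1)) (α i) ⊆ Set.Icc (0:ℝ) 1 := by
    intro y hy
    have := hα_nonneg (i - 1) hi1p
    have := hβ_le1 i hip'
    exact ⟨by linarith [hy.1], by linarith [hy.2]⟩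
  -- images
  have hhat_img_sub : f^[n] '' Shat ⊆ Set.Icc (α (i - 1)) (β i) := by
    rintro _ ⟨x, hx, rfl⟩; exact hx.2
  have hgap_img : f^[n] '' Sgap = Set.Ioo (β (i - 1)) (α i) := by
    apply Set.Subset.antisymm
    · rintro _ ⟨x, hx, rfl⟩; exact hx.2
    · intro y hy
      obtain ⟨x, hx, hfx⟩ := XJ_surj hbounds (fun j hj => (hbr j hj).2) hIoo01 n a ha y hy
      exact ⟨x, hx, hfx⟩
  -- nonempty Shat
  obtain ⟨x₀, hx₀, -⟩ := XJ_surj hbounds (fun j hj => (hbr j hj).2) hIcc01 n a ha (α i)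
    ⟨by linarith, hαβ2.le⟩
  -- derivative products
  have hDin : ∀ x : ℝ, (∀ k < n, f^[k] x ∈ Set.Icc (α (a k)) (β (a k))) →
      (∀ k < n, f^[k] x ∈ X) := fun x hx k hk => hXsub (a k) (ha k) (hx k hk)
  have hDpos : ∀ x : ℝ, (∀ k < n, f^[k] x ∈ Set.Icc (α (a k)) (β (a k))) →
      0 < |∏ k ∈ Finset.range n, f' (f^[k] x)| := fun x hx =>
    lt_of_lt_of_le (mul_pos hc (pow_pos (by linarith) n)) (hexp n hn x (hDin x hx))
  set m := sInf ((fun x => |∏ k ∈ Finset.range n, f' (f^[k] x)|) '' Shat) with hm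
  have hne : ((fun x => |∏ k ∈ Finset.range n, f' (f^[k] x)|) '' Shat).Nonempty :=
    ⟨_, Set.mem_image_of_mem _ hx₀⟩
  have hbdd : BddBelow ((fun x => |∏ k ∈ Finset.range n, f' (f^[k] x)|) '' Shat) := by
    refine ⟨0, ?_⟩
    rintro _ ⟨x, hx, rfl⟩
    positivity
  have hm_le : ∀ x ∈ Shat, m ≤ |∏ k ∈ Finset.range n, f' (f^[k] x)| := fun x hx =>
    csInf_le hbdd (Set.mem_image_of_mem _ hx)
  have hm_pos : 0 < m := by
    refine lt_of_lt_of_le (mul_pos hc (pow_pos (by linarith : (0:ℝ) < lam) n)) (le_csInf hne ?_)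
    rintro _ ⟨x, hx, rfl⟩
    exact hexp n hn x (hDin x hx.1)
  have hgapD : ∀ y ∈ Sgap, |∏ k ∈ Finset.range n, f' (f^[k] y)| ≤ M₀ * m := by
    intro y hy
    have h1 : ∀ x ∈ Shat, |∏ k ∈ Finset.range n, f' (f^[k] y)| / M₀ ≤
        |∏ k ∈ Finset.range n, f' (f^[k] x)| := by
      intro x hx
      have hd := hdist n hn a ha y hy.1 x hx.1
      have hDx := hDpos x hx.1
      rw [div_le_iff₀ hDx] at hd
      rw [div_le_iff₀ hM0pos]
      nlinarith
    have h2 : |∏ k ∈ Finset.range n, f' (f^[k] y)| / M₀ ≤ m := by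
      refine le_csInf hne ?_
      rintro _ ⟨x, hx, rfl⟩
      exact h1 x hx
    rw [div_le_iff₀ hM0pos] at h2
    rw [mul_comm]
    exact h2
  -- volumes
  have hvol_hat := XJ_volume_image hmhat (XJ_deriv hder hXsub n a ha)
    (XJ_inj (fun j hj => (hbr j hj).1) n a ha)
  have hvol_gap := XJ_volume_image hmgap (XJ_deriv hder hXsub n a ha)
    (XJ_inj (fun j hj => (hbr j hj).1) n a ha)
  have hsub_hat : Shat ⊆ Set.Icc (α (a 0)) (β (a 0)) := by
    intro x hx
    simpa using hx.1 0 (by omega)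
  have hsub_gap : Sgap ⊆ Set.Icc (α (a 0)) (β (a 0)) := by
    intro x hx
    simpa using hx.1 0 (by omega)
  have hfin_hat : volume Shat ≠ ⊤ :=
    ne_top_of_le_ne_top (by rw [Real.volume_Icc]; exact ENNReal.ofReal_ne_top)
      (measure_mono hsub_hat)
  have hfin_gap : volume Sgap ≠ ⊤ :=
    ne_top_of_le_ne_top (by rw [Real.volume_Icc]; exact ENNReal.ofReal_ne_top)
      (measure_mono hsub_gap)
  -- inequality 1 : m * len Shat ≤ β i - α (i-1)
  have hE1 : ENNReal.ofReal m * volume Shat ≤ ENNReal.ofReal (β i - α (i - 1)) := by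
    calc ENNReal.ofReal m * volume Shat
        = ∫⁻ _ in Shat, ENNReal.ofReal m := (setLIntegral_const _ _).symm
      _ ≤ ∫⁻ x in Shat, ENNReal.ofReal |∏ k ∈ Finset.range n, f' (f^[k] x)| :=
          setLIntegral_mono' hmhat (fun x hx => ENNReal.ofReal_le_ofReal (hm_le x hx))
      _ = volume (f^[n] '' Shat) := hvol_hat.symm
      _ ≤ volume (Set.Icc (α (i - 1)) (β i)) := measure_mono hhat_img_sub
      _ = ENNReal.ofReal (β i - α (i - 1)) := Real.volume_Icc
  have hR1 : m * (volume Shat).toReal ≤ β i - α (i - 1) := by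
    have h := (ENNReal.toReal_le_toReal (ne_top_of_le_ne_top ENNReal.ofReal_ne_top hE1)
      ENNReal.ofReal_ne_top).mpr hE1
    rwa [ENNReal.toReal_mul, ENNReal.toReal_ofReal hm_pos.le,
      ENNReal.toReal_ofReal (by linarith)] at h
  -- inequality 2 : α i - β (i-1) ≤ M₀ * m * len Sgap
  have hE2 : ENNReal.ofReal (α i - β (i - 1)) ≤ ENNReal.ofReal (M₀ * m) * volume Sgap := by
    calc ENNReal.ofReal (α i - β (i - 1))
        = volume (Set.Ioo (β (i - 1)) (α i)) := Real.volume_Ioo.symm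
      _ = volume (f^[n] '' Sgap) := by rw [hgap_img]
      _ = ∫⁻ x in Sgap, ENNReal.ofReal |∏ k ∈ Finset.range n, f' (f^[k] x)| := hvol_gap
      _ ≤ ∫⁻ _ in Sgap, ENNReal.ofReal (M₀ * m) :=
          setLIntegral_mono' hmgap (fun x hx => ENNReal.ofReal_le_ofReal (hgapD x hx))
      _ = ENNReal.ofReal (M₀ * m) * volume Sgap := setLIntegral_const _ _
  have hR2 : α i - β (i - 1) ≤ M₀ * m * (volume Sgap).toReal := by
    have hne2 : ENNReal.ofReal (M₀ * m) * volume Sgap ≠ ⊤ :=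
      ENNReal.mul_ne_top ENNReal.ofReal_ne_top hfin_gap
    have h := (ENNReal.toReal_le_toReal ENNReal.ofReal_ne_top hne2).mpr hE2
    rwa [ENNReal.toReal_ofReal (by linarith), ENNReal.toReal_mul,
      ENNReal.toReal_ofReal (mul_nonneg hM0pos.le hm_pos.le)] at h
  -- conclude
  have hGpos : 0 < (volume Sgap).toReal := by
    nlinarith [hR2, mul_pos hM0pos hm_pos]
  have hHnn : (0:ℝ) ≤ (volume Shat).toReal := ENNReal.toReal_nonneg
  have hlen_hat : len (Xhat f α β a n i) = (volume Shat).toReal := by rw [len, ehat]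
  have hlen_gap : len (Xgap f α β a n i) = (volume Sgap).toReal := by rw [len, egap]
  have hkey : len (Xhat f α β a n i) / len (Xgap f α β a n i) ≤ M₀ / (α i - β (i - 1)) := by
    rw [hlen_hat, hlen_gap, div_le_div_iff₀ hGpos hg]
    nlinarith [mul_le_mul_of_nonneg_left hR2 hHnn,
      mul_le_mul_of_nonneg_right hR1 (le_of_lt (mul_pos hM0pos hGpos)),
      mul_le_mul_of_nonneg_right hB1 (le_of_lt (mul_pos hM0pos hGpos))]
  have hval : (1 - M₀⁻¹ * (α i - β (i - 1))) / (M₀⁻¹ * (α i - β (i - 1))) =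
      M₀ / (α i - β (i - 1)) - 1 := by
    field_simp
  calc len (Xhat f α β a n i) / len (Xgap f α β a n i) - 1
      ≤ M₀ / (α i - β (i - 1)) - 1 := by linarith
    _ = (1 - M₀⁻¹ * (α i - β (i - 1))) / (M₀⁻¹ * (α i - β (i - 1))) := hval.symm
    _ ≤ (Finset.Icc 1 (p - 1)).sup' (Finset.nonempty_Icc.mpr (by omega))
          (fun j => (1 - M₀⁻¹ * (α j - β (j - 1))) / (M₀⁻¹ * (α j - β (j - 1)))) :=
        Finset.le_sup' (f := fun j => (1 - M₀⁻¹ * (α j - β (j - 1))) / (M₀⁻¹ * (α j - β (j - 1)))) (Finset.mem_Icc.mpr ⟨h1i, hip⟩)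
end
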